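/- Specialization of the extended measure along a continuous order-preserving additive map (abstract form of the paper's proposition that the motivic measure specializes to the Haar measure): Let Y ⊆ X and let ν be a countably additive measure on a σ-algebra Σ of subsets of Y such that C ∩ Y ∈ Σ for every C ∈ 𝒮. Let φ : G → ℝ be a continuous additive group homomorphism that is order-preserving (a ≤ b implies φ(a) ≤ φ(b)), and suppose ν(C ∩ Y) = φ(μ(C)) for every C ∈ 𝒮. Then for every measurable A ⊆ X (in the sense of the definition below), the set A ∩ Y is measurable with respect to the completion ν̄ of ν, and ν̄(A ∩ Y) = φ(μ(A)). -/

import Mathlib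

open Filter Topology MeasureTheory

/-- A series `Σ_{i∈ℕ} x i` converges to `s` if its partial sums `Σ_{i=0}^{N} x i`
converge to `s` as `N → ∞`. -/
def SeriesConvTo {G : Type*} [AddCommMonoid G] [TopologicalSpace G]
    (x : ℕ → G) (s : G) : Prop :=
  Tendsto (fun N => ∑ i ∈ Finset.range (N + 1), x i) atTop (𝓝 s)

/-- `A ⊆ X` is measurable with measure value `L`: for every `m` there are a
stable set `Am m` and a sequence of stable sets `C m i` with `Σ_i μ (C m i)`
convergent (to `s m`), `A △ Am m ⊆ ⋃ i, C m i`, `s m → 0`, and moreover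
`μ (Am m) → L`. -/
def RMeasureVal {G : Type*} [AddCommMonoid G] [TopologicalSpace G] {X : Type*}
    (S : Set (Set X)) (μ : Set X → G) (A : Set X) (L : G) : Prop :=
  ∃ (Am : ℕ → Set X) (C : ℕ → ℕ → Set X) (s : ℕ → G),
    (∀ m, Am m ∈ S) ∧ (∀ m i, C m i ∈ S) ∧
    (∀ m, SeriesConvTo (fun i => μ (C m i)) (s m)) ∧
    (∀ m, symmDiff A (Am m) ⊆ ⋃ i, C m i) ∧
    Tendsto s atTop (𝓝 0) ∧
    Tendsto (fun m => μ (Am m)) atTop (𝓝 L)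

/-- Specialization of the extended measure along a continuous order-preserving
additive map: if `ν` is a countably additive measure on a σ-algebra of subsets of
`Y ⊆ X` containing all traces `C ∩ Y` of stable sets, `φ : G → ℝ` is a continuous
order-preserving additive homomorphism with `ν (C ∩ Y) = φ (μ C)` for all stable
`C`, then for every measurable `A ⊆ X` with measure value `L`, the trace `A ∩ Y`
is measurable for the completion of `ν` and its measure is `φ L`. -/
theorem extended_measure_specializes {G : Type*} [AddCommGroup G] [UniformSpace G]
    [IsUniformAddGroup G] [CompleteSpace G] [T2Space G] [PartialOrder G]
    {X : Type*}
    (hadd : ∀ a b c : G, a ≤ b → a + c ≤ b + c)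
    (hclosed : ∀ (u v : ℕ → G) (lu lv : G), (∀ n, u n ≤ v n) →
      Tendsto u atTop (𝓝 lu) → Tendsto v atTop (𝓝 lv) → lu ≤ lv)
    (hsqueeze : ∀ (u v w : ℕ → G), (∀ n, u n ≤ v n) → (∀ n, v n ≤ w n) →
      Tendsto u atTop (𝓝 (0 : G)) → Tendsto w atTop (𝓝 (0 : G)) →
      Tendsto v atTop (𝓝 (0 : G)))
    (S : Set (Set X)) (μ : Set X → G)
    (hempty : ∅ ∈ S)
    (hunion : ∀ A B : Set X, A ∈ S → B ∈ S → A ∪ B ∈ S)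
    (hinter : ∀ A B : Set X, A ∈ S → B ∈ S → A ∩ B ∈ S)
    (hdiff : ∀ A B : Set X, A ∈ S → B ∈ S → A \ B ∈ S)
    (hsubcover : ∀ A : Set X, A ∈ S → ∀ C : ℕ → Set X, (∀ i, C i ∈ S) →
      A ⊆ ⋃ i, C i → ∃ F : Finset ℕ, A ⊆ ⋃ i ∈ F, C i)
    (hμadd : ∀ A B : Set X, A ∈ S → B ∈ S → Disjoint A B → μ (A ∪ B) = μ A + μ B)
    (hμpos : ∀ A : Set X, A ∈ S → 0 ≤ μ A)
    (Y : Set X) [MeasurableSpace Y] (ν : Measure Y)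
    (hSmeas : ∀ C ∈ S, MeasurableSet ((Subtype.val ⁻¹' C : Set Y)))
    (φ : G → ℝ)
    (hφadd : ∀ a b : G, φ (a + b) = φ a + φ b)
    (hφcont : Continuous φ)
    (hφmono : ∀ a b : G, a ≤ b → φ a ≤ φ b)
    (hcompat : ∀ C ∈ S, ν (Subtype.val ⁻¹' C : Set Y) = ENNReal.ofReal (φ (μ C)))
    (A : Set X) (L : G) (hA : RMeasureVal S μ A L) :
    NullMeasurableSet (Subtype.val ⁻¹' A : Set Y) ν ∧
      ν (Subtype.val ⁻¹' A : Set Y) = ENNReal.ofReal (φ L) := by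
  obtain ⟨Am, C, s, hAmS, hCS, hconv, hsymm, hs0, hμAm⟩ := hA
  have φ0 : φ 0 = 0 := by
    have h := hφadd 0 0; rw [add_zero] at h; linarith
  have hf_nonneg : ∀ m i, 0 ≤ φ (μ (C m i)) := fun m i => by
    have := hφmono 0 (μ (C m i)) (hμpos _ (hCS m i)); rwa [φ0] at this
  -- φ of the series converges
  have hφs : ∀ m, HasSum (fun i => φ (μ (C m i))) (φ (s m)) := by
    intro m
    rw [hasSum_iff_tendsto_nat_of_nonneg (hf_nonneg m)]
    have h1 : Tendsto (fun N => φ (∑ i ∈ Finset.range (N + 1), μ (C m i))) atTop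
        (𝓝 (φ (s m))) := (hφcont.tendsto (s m)).comp (hconv m)
    have h2 : ∀ N, φ (∑ i ∈ Finset.range N, μ (C m i))
        = ∑ i ∈ Finset.range N, φ (μ (C m i)) := by
      intro N
      induction N with
      | zero => simp [φ0]
      | succ n ih => rw [Finset.sum_range_succ, Finset.sum_range_succ, hφadd, ih]
    simp only [h2] at h1
    exact (tendsto_add_atTop_iff_nat 1).mp h1
  set A' : Set Y := (Subtype.val ⁻¹' A : Set Y) with hA'
  set B : ℕ → Set Y := fun m => (Subtype.val ⁻¹' (Am m) : Set Y) with hB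
  set δ : ℕ → ENNReal := fun m => ENNReal.ofReal (φ (s m)) with hδ
  have hBmeas : ∀ m, MeasurableSet (B m) := fun m => hSmeas _ (hAmS m)
  -- the symmetric difference has small measure
  have hsd : ∀ m, ν (symmDiff A' (B m)) ≤ δ m := by
    intro m
    have hsub : symmDiff A' (B m) ⊆ ⋃ i, (Subtype.val ⁻¹' (C m i) : Set Y) := by
      intro x hx
      have : (x : X) ∈ symmDiff A (Am m) := by
        rcases hx with hx | hx
        · exact Or.inl ⟨hx.1, hx.2⟩
        · exact Or.inr ⟨hx.1, hx.2⟩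
      rcases (hsymm m this) with h
      simpa using h
    calc ν (symmDiff A' (B m)) ≤ ν (⋃ i, (Subtype.val ⁻¹' (C m i) : Set Y)) :=
          measure_mono hsub
      _ ≤ ∑' i, ν (Subtype.val ⁻¹' (C m i) : Set Y) := measure_iUnion_le _
      _ = ∑' i, ENNReal.ofReal (φ (μ (C m i))) := by
          exact tsum_congr fun i => hcompat _ (hCS m i)
      _ = ENNReal.ofReal (∑' i, φ (μ (C m i))) :=
          (ENNReal.ofReal_tsum_of_nonneg (hf_nonneg m) (hφs m).summable).symm
      _ = δ m := by rw [(hφs m).tsum_eq]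
  have hδ0 : Tendsto δ atTop (𝓝 0) := by
    have h := (ENNReal.continuous_ofReal.tendsto (φ 0)).comp ((hφcont.tendsto 0).comp hs0)
    simpa [δ, φ0, Function.comp_def] using h
  -- choose a subsequence with geometric control
  have hψ : ∀ k : ℕ, ∃ m, δ m ≤ (2 : ENNReal)⁻¹ ^ k := by
    intro k
    have hpos : (0 : ENNReal) < (2 : ENNReal)⁻¹ ^ k :=
      ENNReal.pow_pos (by norm_num) k
    exact ((ENNReal.tendsto_nhds_zero.mp hδ0) _ hpos).exists
  choose ψ hψle using hψ
  set U : ℕ → Set Y := fun n => ⋃ k, B (ψ (n + k)) with hU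
  set E : Set Y := ⋂ n, U n with hE
  have hEmeas : MeasurableSet E :=
    MeasurableSet.iInter fun n => MeasurableSet.iUnion fun k => hBmeas _
  have hgeo : Tendsto (fun k : ℕ => ((2 : ENNReal)⁻¹) ^ k) atTop (𝓝 0) :=
    ENNReal.tendsto_pow_atTop_nhds_zero_of_lt_one (by norm_num)
  -- A' \ E is null
  have hAE : ν (A' \ E) = 0 := by
    have hn : ∀ n, ν (A' \ U n) = 0 := by
      intro n
      have hle : ∀ k, ν (A' \ U n) ≤ (2 : ENNReal)⁻¹ ^ (n + k) := by
        intro k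
        refine le_trans (le_trans (measure_mono ?_) (hsd (ψ (n + k)))) (hψle _)
        intro x hx
        exact Or.inl ⟨hx.1, fun hxB => hx.2 (Set.mem_iUnion.mpr ⟨k, hxB⟩)⟩
      have h0 : Tendsto (fun k : ℕ => ((2 : ENNReal)⁻¹) ^ (n + k)) atTop (𝓝 0) := by
        simpa [Function.comp_def, add_comm] using hgeo.comp (tendsto_add_atTop_nat n)
      exact le_antisymm (ge_of_tendsto' h0 hle) (by simp)
    have : A' \ E ⊆ ⋃ n, A' \ U n := by
      intro x hx
      obtain ⟨n, hn'⟩ : ∃ n, x ∉ U n := by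
        by_contra h; push_neg at h; exact hx.2 (Set.mem_iInter.mpr h)
      exact Set.mem_iUnion.mpr ⟨n, hx.1, hn'⟩
    exact le_antisymm (le_trans (measure_mono this)
      (le_trans (measure_iUnion_le _) (by simp [hn]))) (by simp)
  -- E \ A' is null
  have hEA : ν (E \ A') = 0 := by
    have hle : ∀ n, ν (E \ A') ≤ (2 : ENNReal)⁻¹ ^ n * 2 := by
      intro n
      have h1 : E \ A' ⊆ ⋃ k, (B (ψ (n + k)) \ A') := by
        intro x hx
        have : x ∈ U n := Set.mem_iInter.mp hx.1 n
        obtain ⟨k, hk⟩ := Set.mem_iUnion.mp this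
        exact Set.mem_iUnion.mpr ⟨k, hk, hx.2⟩
      calc ν (E \ A') ≤ ∑' k, ν (B (ψ (n + k)) \ A') :=
            le_trans (measure_mono h1) (measure_iUnion_le _)
        _ ≤ ∑' k, (2 : ENNReal)⁻¹ ^ (n + k) := by
            refine ENNReal.tsum_le_tsum fun k => ?_
            refine le_trans (le_trans (measure_mono ?_) (hsd (ψ (n + k)))) (hψle _)
            intro x hx; exact Or.inr ⟨hx.1, hx.2⟩
        _ = (2 : ENNReal)⁻¹ ^ n * ∑' k, (2 : ENNReal)⁻¹ ^ k := by
            rw [← ENNReal.tsum_mul_left]; exact tsum_congr fun k => pow_add _ n k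
        _ = (2 : ENNReal)⁻¹ ^ n * 2 := by
            rw [ENNReal.tsum_geometric]
            norm_num
    have h0 : Tendsto (fun n : ℕ => ((2 : ENNReal)⁻¹) ^ n * 2) atTop (𝓝 0) := by
      have := ENNReal.Tendsto.mul_const hgeo (Or.inr (by norm_num : (2:ENNReal) ≠ ⊤))
      simpa using this
    exact le_antisymm (ge_of_tendsto' h0 hle) (by simp)
  have haeq : A' =ᵐ[ν] E := (MeasureTheory.ae_eq_set).mpr ⟨hAE, hEA⟩
  refine ⟨(hEmeas.nullMeasurableSet).congr haeq.symm, ?_⟩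
  -- measure value
  have hνB : ∀ m, ν (B m) = ENNReal.ofReal (φ (μ (Am m))) := fun m => hcompat _ (hAmS m)
  have hBlim : Tendsto (fun m => ν (B m)) atTop (𝓝 (ENNReal.ofReal (φ L))) := by
    simp only [hνB]
    exact (ENNReal.continuous_ofReal.tendsto (φ L)).comp ((hφcont.tendsto L).comp hμAm)
  have hsub1 : ∀ m, ν A' ≤ ν (B m) + δ m := by
    intro m
    have : A' ⊆ B m ∪ symmDiff A' (B m) := by
      intro x hx
      by_cases hxB : x ∈ B m
      · exact Or.inl hxB
      · exact Or.inr (Or.inl ⟨hx, hxB⟩)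
    calc ν A' ≤ ν (B m ∪ symmDiff A' (B m)) := measure_mono this
      _ ≤ ν (B m) + ν (symmDiff A' (B m)) := measure_union_le _ _
      _ ≤ ν (B m) + δ m := add_le_add_right (hsd m) _
  have hsub2 : ∀ m, ν (B m) ≤ ν A' + δ m := by
    intro m
    have : B m ⊆ A' ∪ symmDiff A' (B m) := by
      intro x hx
      by_cases hxA : x ∈ A'
      · exact Or.inl hxA
      · exact Or.inr (Or.inr ⟨hx, hxA⟩)
    calc ν (B m) ≤ ν (A' ∪ symmDiff A' (B m)) := measure_mono this
      _ ≤ ν A' + ν (symmDiff A' (B m)) := measure_union_le _ _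
      _ ≤ ν A' + δ m := add_le_add_right (hsd m) _
  have hfin : ν A' ≠ ⊤ := by
    refine ne_top_of_le_ne_top ?_ (hsub1 0)
    rw [hνB]
    exact ENNReal.add_ne_top.mpr ⟨ENNReal.ofReal_ne_top, ENNReal.ofReal_ne_top⟩
  have hAlim : Tendsto (fun m => ν (B m)) atTop (𝓝 (ν A')) := by
    rw [ENNReal.tendsto_nhds hfin]
    intro ε hε
    filter_upwards [ENNReal.tendsto_nhds_zero.mp hδ0 ε hε] with m hm
    constructor
    · exact tsub_le_iff_right.mpr (le_trans (hsub1 m) (add_le_add_right hm _))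
    · exact le_trans (hsub2 m) (add_le_add_right hm _)
  exact tendsto_nhds_unique hAlim hBlim
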